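/- The measure $\nu(dx\,dy) = P(x,dy)\mu(dx)$ is a stationary distribution of the augmented MH kernel $K_{\mathrm{aug}}((x,y),du\,dv) = \alpha(x,y)\delta_y(du)P(y,dv) + (1-\alpha(x,y))\delta_x(du)P(x,dv)$, i.e., $\nu K_{\mathrm{aug}} = \nu$. -/

import Mathlib

open MeasureTheory ProbabilityTheory ENNReal Filter

/-- ν(dx dy) = P(x,dy)μ(dx) is stationary for the augmented MH
kernel. -/
theorem nu_stationary_for_Kaug
    {G : Type*} [MeasurableSpace G]
    (μ₀ : Measure G) [SigmaFinite μ₀]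
    (ρ : G → ℝ) (hρm : Measurable ρ) (hρ0 : ∀ x, 0 ≤ ρ x) (hρint : Integrable ρ μ₀)
    (Z : ℝ) (hZ : Z = ∫ x, ρ x ∂μ₀) (hZpos : 0 < Z)
    (μ : Measure G) [SFinite μ]
    (hμ : μ = μ₀.withDensity fun x => ENNReal.ofReal (ρ x / Z))
    (P : Kernel G G) [IsMarkovKernel P]
    (p : G → G → ℝ) (hpm : Measurable (Function.uncurry p)) (hp0 : ∀ x y, 0 ≤ p x y)
    (hP : ∀ x, P x = μ₀.withDensity fun y => ENNReal.ofReal (p x y))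
    (hpos : ∀ x y, 0 < ρ y → 0 < p x y)
    (bar : G → G → ℝ) (hbar : ∀ x y, bar x y = if 0 < ρ y then ρ y / p x y else 0)
    (r : G → G → ℝ)
    (hr : ∀ x y, r x y = if 0 < ρ x * p x y then ρ y * p y x / (ρ x * p x y) else 1)
    (α : G → G → ℝ) (hα : ∀ x y, α x y = min 1 (r x y))
    (K : Kernel G G) [IsMarkovKernel K]
    (hK : ∀ x, K x = (P x).withDensity (fun y => ENNReal.ofReal (α x y)) +
      ENNReal.ofReal (∫ y, (1 - α x y) ∂(P x)) • Measure.dirac x)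
    (Kaug : Kernel (G × G) (G × G)) [IsMarkovKernel Kaug]
    (hKaug : ∀ x y, Kaug (x, y) =
      ENNReal.ofReal (α x y) • ((Measure.dirac y).prod (P y)) +
      ENNReal.ofReal (1 - α x y) • ((Measure.dirac x).prod (P x)))
    (ν : Measure (G × G)) (hν : ν = μ.compProd P)
    (hstat : μ.bind (fun x => K x) = μ) :
    ν.bind (fun q => Kaug q) = ν := by

  -- measurability of r and α
  have hrm : Measurable (Function.uncurry r) := by
    have heq : Function.uncurry r = fun q : G × G =>
        if 0 < ρ q.1 * p q.1 q.2 then ρ q.2 * p q.2 q.1 / (ρ q.1 * p q.1 q.2) else 1 := by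
      ext q; simp [Function.uncurry, hr]
    rw [heq]
    have h1 : Measurable fun q : G × G => ρ q.1 * p q.1 q.2 :=
      (hρm.comp measurable_fst).mul hpm
    have h2 : Measurable fun q : G × G => ρ q.2 * p q.2 q.1 :=
      (hρm.comp measurable_snd).mul (hpm.comp measurable_swap)
    exact Measurable.ite (measurableSet_lt measurable_const h1) (h2.div h1) measurable_const
  have hαm : Measurable (Function.uncurry α) := by
    have heq : Function.uncurry α = fun q : G × G => min 1 (Function.uncurry r q) := by
      ext q; simp [Function.uncurry, hα]
    rw [heq]; exact measurable_const.min hrm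
  have hα0 : ∀ x y, 0 ≤ α x y := by
    intro x y; rw [hα, hr]
    split
    · exact le_min zero_le_one (div_nonneg (mul_nonneg (hρ0 _) (hp0 _ _)) (le_of_lt ‹_›))
    · simp
  have hα1 : ∀ x y, α x y ≤ 1 := fun x y => by rw [hα]; exact min_le_left _ _
  ext s hs
  set g : G → ℝ≥0∞ := fun u => P u (Prod.mk u ⁻¹' s) with hgdef
  have hg : Measurable g := Kernel.measurable_kernel_prodMk_left hs
  have hαmx : ∀ x : G, Measurable fun y => α x y := fun x =>
    hαm.comp measurable_prodMk_left
  have hL : (ν.bind fun q => Kaug q) s =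
      ∫⁻ x, ∫⁻ y, (ENNReal.ofReal (α x y) * g y
        + ENNReal.ofReal (1 - α x y) * g x) ∂(P x) ∂μ := by
    rw [Measure.bind_apply hs (Kernel.measurable Kaug).aemeasurable, hν,
      Measure.lintegral_compProd (Kaug.measurable_coe hs)]
    refine lintegral_congr fun x => lintegral_congr fun y => ?_
    rw [hKaug, Measure.add_apply, Measure.smul_apply, Measure.smul_apply,
      Measure.dirac_prod, Measure.dirac_prod,
      Measure.map_apply measurable_prodMk_left hs,
      Measure.map_apply measurable_prodMk_left hs, smul_eq_mul, smul_eq_mul]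
  have hR : ν s = ∫⁻ x, g x ∂μ := by
    rw [hν, Measure.compProd_apply hs]
  have hR2 : ∫⁻ x, g x ∂μ =
      ∫⁻ x, (∫⁻ y, ENNReal.ofReal (α x y) * g y ∂(P x)
        + ENNReal.ofReal (∫ y, (1 - α x y) ∂(P x)) * g x) ∂μ := by
    conv_lhs => rw [← hstat]
    rw [Measure.lintegral_bind (Kernel.measurable K).aemeasurable hg.aemeasurable]
    refine lintegral_congr fun x => ?_
    rw [hK, lintegral_add_measure,
      lintegral_withDensity_eq_lintegral_mul _ (hαmx x).ennreal_ofReal hg,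
      lintegral_smul_measure, lintegral_dirac' _ hg]
    rfl
  rw [hL, hR, hR2]
  refine lintegral_congr fun x => ?_
  have hmA : Measurable fun y => ENNReal.ofReal (α x y) * g y :=
    (ENNReal.measurable_ofReal.comp (hαmx x)).mul hg
  rw [lintegral_add_left hmA]
  congr 1
  have hm1α : Measurable fun y => ENNReal.ofReal (1 - α x y) :=
    ENNReal.measurable_ofReal.comp (measurable_const.sub (hαmx x))
  rw [lintegral_mul_const _ hm1α]
  congr 1
  have hint : Integrable (fun y => 1 - α x y) (P x) := by
    refine (integrable_const (1:ℝ)).mono'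
      ((measurable_const.sub (hαmx x)).aestronglyMeasurable) ?_
    filter_upwards with y
    rw [Real.norm_eq_abs, abs_le]
    constructor
    · nlinarith [hα1 x y]
    · nlinarith [hα0 x y]
  have hnn : 0 ≤ᵐ[P x] fun y => 1 - α x y := by
    filter_upwards with y; simp [hα1 x y]
  exact (ofReal_integral_eq_lintegral_ofReal hint hnn).symm
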